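/- arXiv:2005.06571 — 6 statements merged into one kernel-verified Lean document; each statement's English description precedes it below -/
import Mathlib

section
/- Let Δt > 0, σ > 0, and a, b, c, K₀ ∈ ℝ. For each ε > 0 let K(ε) be the unique real number satisfying the implicit-explicit Euler update (K(ε) − K₀)/Δt = −a/ε − (b + σ·K(ε))/ε² − c·K₀, i.e. K(ε) = (K₀ − Δt·a/ε − Δt·b/ε² − Δt·c·K₀)/(1 + Δt·σ/ε²). Then K(ε) tends to −b/σ as ε → 0⁺. -/
open Filter

/-- One IMEX (forward-backward) Euler step of the stiff K-step equation: as `ε → 0⁺`,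
the update `K(ε) = (K₀ − Δt·a/ε − Δt·b/ε² − Δt·c·K₀)/(1 + Δt·σ/ε²)` tends to `−b/σ`. -/
theorem imex_euler_K_step_limit (Δt σ a b c K₀ : ℝ) (hΔt : 0 < Δt) (hσ : 0 < σ)
    (K : ℝ → ℝ)
    (hK : ∀ ε : ℝ, 0 < ε →
      K ε = (K₀ - Δt * a / ε - Δt * b / ε ^ 2 - Δt * c * K₀) / (1 + Δt * σ / ε ^ 2)) :
    Tendsto K (nhdsWithin 0 (Set.Ioi 0)) (nhds (-b / σ)) := by
  set f : ℝ → ℝ := fun ε => (ε ^ 2 * K₀ - Δt * a * ε - Δt * b - Δt * c * K₀ * ε ^ 2) /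
    (ε ^ 2 + Δt * σ) with hf
  have hfeq : ∀ ε : ℝ, 0 < ε → K ε = f ε := by
    intro ε hε
    have hε2 : (ε : ℝ) ^ 2 ≠ 0 := pow_ne_zero _ hε.ne'
    rw [hK ε hε, hf]
    field_simp
  have hden : (0 : ℝ) ^ 2 + Δt * σ ≠ 0 := by positivity
  have hlim : Tendsto f (nhdsWithin 0 (Set.Ioi 0)) (nhds (-b / σ)) := by
    have : ContinuousAt f 0 := by
      apply ContinuousAt.div
      · fun_prop
      · fun_prop
      · exact hden
    have h0 : f 0 = -b / σ := by
      simp only [hf]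
      rw [div_eq_div_iff hden hσ.ne']
      ring
    have := this.continuousWithinAt (s := Set.Ioi 0)
    rw [ContinuousWithinAt, h0] at this
    exact this
  refine hlim.congr' ?_
  filter_upwards [self_mem_nhdsWithin] with ε hε
  exact (hfeq ε hε).symm
end

section
/- Let r ≥ 1, let A be a symmetric positive definite r×r real matrix, let Δt > 0, and let b, c, d, L₀ ∈ ℝʳ. Then for every ε > 0 the matrix ε²·I + Δt·A is invertible, and the vector L(ε) := (ε²·I + Δt·A)⁻¹ (ε²·L₀ − ε·Δt·c − Δt·b − ε²·Δt·d) converges to −A⁻¹ b as ε → 0⁺. -/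
open Filter Matrix

lemma posDef_aux {r : ℕ} (A : Matrix (Fin r) (Fin r) ℝ) (hA : A.PosDef)
    {Δt : ℝ} (hΔt : 0 < Δt) {ε : ℝ} (hε : 0 < ε) :
    (ε ^ 2 • (1 : Matrix (Fin r) (Fin r) ℝ) + Δt • A).PosDef := by
  have hAt : Aᵀ = A := by simpa using hA.isHermitian.eq
  refine posDef_iff_dotProduct_mulVec.mpr ⟨?_, ?_⟩
  · simp [Matrix.IsHermitian, conjTranspose_add, conjTranspose_smul, conjTranspose_one, hAt]
  · intro x hx
    have h1 : (0:ℝ) < star x ⬝ᵥ x := by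
      simpa using Matrix.dotProduct_star_self_pos_iff.mpr hx
    have h2 : (0:ℝ) < star x ⬝ᵥ (A *ᵥ x) := hA.dotProduct_mulVec_pos hx
    simp only [add_mulVec, smul_mulVec, one_mulVec, dotProduct_add, dotProduct_smul,
      smul_eq_mul]
    have : (0:ℝ) < ε ^ 2 := by positivity
    exact add_pos (mul_pos this h1) (mul_pos hΔt h2)

/-- IMEX Euler update of the L-step: for a symmetric positive definite matrix `A` and
`Δt > 0`, the matrix `ε²·I + Δt·A` is invertible for every `ε > 0`, and
`L(ε) = (ε²·I + Δt·A)⁻¹ (ε²·L₀ − ε·Δt·c − Δt·b − ε²·Δt·d)` converges to `−A⁻¹ b`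
as `ε → 0⁺`. -/
theorem imex_euler_L_step_limit (r : ℕ) (hr : 1 ≤ r)
    (A : Matrix (Fin r) (Fin r) ℝ) (hA : A.PosDef) (Δt : ℝ) (hΔt : 0 < Δt)
    (b c d L₀ : Fin r → ℝ) :
    (∀ ε : ℝ, 0 < ε → IsUnit (ε ^ 2 • (1 : Matrix (Fin r) (Fin r) ℝ) + Δt • A)) ∧
    Tendsto
      (fun ε : ℝ =>
        (ε ^ 2 • (1 : Matrix (Fin r) (Fin r) ℝ) + Δt • A)⁻¹ *ᵥ
          (ε ^ 2 • L₀ - (ε * Δt) • c - Δt • b - (ε ^ 2 * Δt) • d))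
      (nhdsWithin 0 (Set.Ioi 0)) (nhds (-(A⁻¹ *ᵥ b))) := by
  refine ⟨fun ε hε => (posDef_aux A hA hΔt hε).isUnit, ?_⟩
  -- the matrix-valued function is continuous
  have hM : Continuous (fun ε : ℝ => ε ^ 2 • (1 : Matrix (Fin r) (Fin r) ℝ) + Δt • A) :=
    (((continuous_pow 2).smul continuous_const).add continuous_const)
  have hMdef : PosDef (Δt • A) := by
    refine posDef_iff_dotProduct_mulVec.mpr ⟨?_, ?_⟩
    · have hAt : Aᵀ = A := by simpa using hA.isHermitian.eq
      simp [Matrix.IsHermitian, conjTranspose_smul, hAt]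
    · intro x hx
      simpa [smul_mulVec] using mul_pos hΔt (hA.dotProduct_mulVec_pos hx)
  have hdet : IsUnit (Δt • A).det := (Matrix.isUnit_iff_isUnit_det _).mp hMdef.isUnit
  have hM0 : Tendsto (fun ε : ℝ => ε ^ 2 • (1 : Matrix (Fin r) (Fin r) ℝ) + Δt • A)
      (nhdsWithin 0 (Set.Ioi 0)) (nhds (Δt • A)) := by
    have := hM.continuousAt (x := 0)
    simpa using this.continuousWithinAt.tendsto
  have hinvcont : ContinuousAt Inv.inv (Δt • A) :=
    continuousAt_matrix_inv _ <| by
      simpa using NormedRing.inverse_continuousAt hdet.unit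
  have hMinv : Tendsto (fun ε : ℝ => (ε ^ 2 • (1 : Matrix (Fin r) (Fin r) ℝ) + Δt • A)⁻¹)
      (nhdsWithin 0 (Set.Ioi 0)) (nhds (Δt • A)⁻¹) := hinvcont.tendsto.comp hM0
  have hv : Tendsto (fun ε : ℝ => ε ^ 2 • L₀ - (ε * Δt) • c - Δt • b - (ε ^ 2 * Δt) • d)
      (nhdsWithin 0 (Set.Ioi 0)) (nhds (-(Δt • b))) := by
    have hcont : Continuous (fun ε : ℝ => ε ^ 2 • L₀ - (ε * Δt) • c - Δt • b - (ε ^ 2 * Δt) • d) :=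
      ((((continuous_pow 2).smul continuous_const).sub
        ((continuous_id.mul continuous_const).smul continuous_const)).sub
        continuous_const).sub (((continuous_pow 2).mul continuous_const).smul continuous_const)
    have := hcont.continuousAt (x := 0)
    have h0 : (fun ε : ℝ => ε ^ 2 • L₀ - (ε * Δt) • c - Δt • b - (ε ^ 2 * Δt) • d) 0 = -(Δt • b) := by
      simp
    simpa [h0] using this.continuousWithinAt.tendsto
  have hmul : Tendsto (fun ε : ℝ =>
        (ε ^ 2 • (1 : Matrix (Fin r) (Fin r) ℝ) + Δt • A)⁻¹ *ᵥ
          (ε ^ 2 • L₀ - (ε * Δt) • c - Δt • b - (ε ^ 2 * Δt) • d))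
      (nhdsWithin 0 (Set.Ioi 0)) (nhds ((Δt • A)⁻¹ *ᵥ (-(Δt • b)))) := by
    have hcont : Continuous (fun p : Matrix (Fin r) (Fin r) ℝ × (Fin r → ℝ) => p.1 *ᵥ p.2) :=
      Continuous.matrix_mulVec continuous_fst continuous_snd
    exact (hcont.continuousAt.tendsto.comp (hMinv.prodMk_nhds hv))
  have hval : (Δt • A)⁻¹ *ᵥ (-(Δt • b)) = -(A⁻¹ *ᵥ b) := by
    have hAdet : IsUnit A.det := (Matrix.isUnit_iff_isUnit_det _).mp hA.isUnit
    have : Invertible Δt := invertibleOfNonzero hΔt.ne'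
    rw [Matrix.inv_smul (A := A) Δt hAdet, mulVec_neg, smul_mulVec, mulVec_smul]
    rw [smul_smul]
    rw [invOf_eq_inv]
    simp [smul_smul, inv_mul_cancel₀ hΔt.ne']
  rw [hval] at hmul
  exact hmul
end

section
/- Let r ≥ 1, let A be a symmetric positive definite r×r real matrix, let Δt > 0, and let S₀, M, N, P be r×r real matrices. Then there exists ε₀ > 0 such that for all 0 < ε < ε₀ the matrix ε²·I − Δt·A is invertible, and the matrix S(ε) := (ε²·I − Δt·A)⁻¹ (ε²·S₀ + ε·Δt·M + Δt·N + ε²·Δt·P) converges to −A⁻¹ N as ε → 0⁺. -/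
open Filter Matrix

/-- IMEX Euler update of the S-step: for a symmetric positive definite matrix `A` and
`Δt > 0`, there is `ε₀ > 0` such that `ε²·I − Δt·A` is invertible for all `0 < ε < ε₀`,
and `S(ε) = (ε²·I − Δt·A)⁻¹ (ε²·S₀ + ε·Δt·M + Δt·N + ε²·Δt·P)` converges to `−A⁻¹ N`
as `ε → 0⁺`. -/
theorem imex_euler_S_step_limit (r : ℕ) (hr : 1 ≤ r)
    (A : Matrix (Fin r) (Fin r) ℝ) (hA : A.PosDef) (Δt : ℝ) (hΔt : 0 < Δt)
    (S₀ M N P : Matrix (Fin r) (Fin r) ℝ) :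
    (∃ ε₀ : ℝ, 0 < ε₀ ∧ ∀ ε : ℝ, 0 < ε → ε < ε₀ →
      IsUnit (ε ^ 2 • (1 : Matrix (Fin r) (Fin r) ℝ) - Δt • A)) ∧
    Tendsto
      (fun ε : ℝ =>
        (ε ^ 2 • (1 : Matrix (Fin r) (Fin r) ℝ) - Δt • A)⁻¹ *
          (ε ^ 2 • S₀ + (ε * Δt) • M + Δt • N + (ε ^ 2 * Δt) • P))
      (nhdsWithin 0 (Set.Ioi 0)) (nhds (-(A⁻¹ * N))) := by
  set f : ℝ → Matrix (Fin r) (Fin r) ℝ :=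
    fun ε => ε ^ 2 • (1 : Matrix (Fin r) (Fin r) ℝ) - Δt • A with hf
  have hfc : Continuous f := by
    apply Continuous.sub
    · exact (continuous_pow 2).smul continuous_const
    · exact continuous_const
  have hf0 : f 0 = -(Δt • A) := by simp [hf]
  have hdetA : A.det ≠ 0 := hA.det_pos.ne'
  have hdet0 : (f 0).det ≠ 0 := by
    rw [hf0, det_neg, det_smul]
    simp only [Fintype.card_fin]
    positivity
  have hdetc : Continuous fun ε => (f ε).det := hfc.matrix_det
  have hev : ∀ᶠ ε in nhds (0 : ℝ), (f ε).det ≠ 0 :=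
    (hdetc.continuousAt (x := 0)).eventually_ne hdet0
  constructor
  · rcases Metric.eventually_nhds_iff.mp hev with ⟨δ, hδ, hδ'⟩
    refine ⟨δ, hδ, fun ε hε hεδ => ?_⟩
    have : (f ε).det ≠ 0 := hδ' (by simp [abs_of_pos hε, hεδ])
    exact (isUnit_iff_isUnit_det _).mpr (isUnit_iff_ne_zero.mpr this)
  · have hcontinv : ContinuousAt Inv.inv (f 0) := by
      apply continuousAt_matrix_inv
      have : ContinuousAt (fun x : ℝ => x⁻¹) (f 0).det :=
        (continuousAt_inv₀ hdet0)
      simpa [Ring.inverse_eq_inv'] using this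
    have hlim : Tendsto (fun ε => (f ε)⁻¹ *
        (ε ^ 2 • S₀ + (ε * Δt) • M + Δt • N + (ε ^ 2 * Δt) • P)) (nhds 0)
        (nhds ((f 0)⁻¹ * ((0:ℝ) ^ 2 • S₀ + ((0:ℝ) * Δt) • M + Δt • N + ((0:ℝ) ^ 2 * Δt) • P)) ) := by
      apply Tendsto.mul
      · exact hcontinv.comp hfc.continuousAt
      · refine Continuous.tendsto ?_ _
        exact ((((continuous_pow 2).smul continuous_const).add
          ((continuous_id.mul continuous_const).smul continuous_const)).add
          continuous_const).add (((continuous_pow 2).mul continuous_const).smul continuous_const)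
    have hval : (f 0)⁻¹ * ((0:ℝ) ^ 2 • S₀ + ((0:ℝ) * Δt) • M + Δt • N + ((0:ℝ) ^ 2 * Δt) • P)
        = -(A⁻¹ * N) := by
      have hAdet : IsUnit A.det := isUnit_iff_ne_zero.mpr hdetA
      have hinv : (f 0)⁻¹ = -(Δt⁻¹ • A⁻¹) := by
        have : Invertible (-Δt) := invertibleOfNonzero (neg_ne_zero.mpr hΔt.ne')
        rw [hf0, show -(Δt • A) = (-Δt) • A from (neg_smul Δt A).symm,
          Matrix.inv_smul (A := A) (-Δt) hAdet]
        simp [invOf_eq_inv, neg_smul, inv_neg]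
      have h2 : ((0:ℝ) ^ 2) = 0 := by norm_num
      rw [hinv]
      simp [h2, Matrix.mul_smul, Matrix.smul_mul, smul_smul,
        inv_mul_cancel₀ hΔt.ne', mul_inv_cancel₀ hΔt.ne']
    rw [← hval]
    exact hlim.mono_left nhdsWithin_le_nhds
end

section
/- Let (Ω, μ) and (Ω′, ν) be measure spaces, let X₁, …, X_r ∈ L²(Ω, μ) and V₁, …, V_r ∈ L²(Ω′, ν) be orthonormal families of real-valued functions, and let σ : Ω → ℝ be measurable with 0 < σ_min ≤ σ(x) ≤ σ_max < ∞ for μ-a.e. x. Let S* be an r×r real matrix and define h(x, v) := Σ_{i,j=1}^r X_i(x) S*_{ij} V_j(v). If an r×r real matrix S satisfies, for all i, j, the Galerkin system Σ_{k=1}^r (∫_Ω σ X_i X_k dμ) S_{kj} = ∫_Ω ∫_{Ω′} X_i(x) σ(x) h(x, v) V_j(v) dν(v) dμ(x), then S = S*. -/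
open MeasureTheory

section Aux

variable {α : Type*} [MeasurableSpace α] {μ : Measure α}

lemma memL2_mul_integrable {f g : α → ℝ} (hf : MemLp f 2 μ) (hg : MemLp g 2 μ) :
    Integrable (fun x => f x * g x) μ := by
  have h : MemLp (f • g) 1 μ := hg.smul hf
  exact memLp_one_iff_integrable.mp h

end Aux

/-- Uniqueness for the weighted Galerkin system of the S-step: if
`h(x,v) = Σ_{i,j} X_i(x) S*_{ij} V_j(v)` with `X`, `V` orthonormal families and the
weight `σ` bounded between positive constants, then any matrix `S` solving the
Galerkin system `Σ_k (∫ σ X_i X_k dμ) S_{kj} = ∫∫ X_i σ h V_j dν dμ` equals `S*`. -/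
theorem galerkin_S_step_unique {Ω Ω' : Type*} [MeasurableSpace Ω] [MeasurableSpace Ω']
    (μ : Measure Ω) (ν : Measure Ω')
    (r : ℕ) (X : Fin r → Ω → ℝ) (V : Fin r → Ω' → ℝ)
    (hX : ∀ i, MemLp (X i) 2 μ) (hV : ∀ j, MemLp (V j) 2 ν)
    (hXortho : ∀ i k, ∫ x, X i x * X k x ∂μ = if i = k then 1 else 0)
    (hVortho : ∀ j l, ∫ v, V j v * V l v ∂ν = if j = l then 1 else 0)
    (σ : Ω → ℝ) (hσmeas : Measurable σ)
    (σmin σmax : ℝ) (hσmin : 0 < σmin) (hminmax : σmin ≤ σmax)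
    (hbound : ∀ᵐ x ∂μ, σmin ≤ σ x ∧ σ x ≤ σmax)
    (Sstar : Matrix (Fin r) (Fin r) ℝ)
    (h : Ω → Ω' → ℝ)
    (hh : ∀ x v, h x v = ∑ i, ∑ j, X i x * Sstar i j * V j v)
    (S : Matrix (Fin r) (Fin r) ℝ)
    (hS : ∀ i j, ∑ k, (∫ x, σ x * X i x * X k x ∂μ) * S k j
      = ∫ x, ∫ v, X i x * σ x * h x v * V j v ∂ν ∂μ) :
    S = Sstar := by
  -- basic integrability facts
  have hXX : ∀ i k : Fin r, Integrable (fun x => X i x * X k x) μ :=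
    fun i k => memL2_mul_integrable (hX i) (hX k)
  have hVV : ∀ j l : Fin r, Integrable (fun v => V j v * V l v) ν :=
    fun j l => memL2_mul_integrable (hV j) (hV l)
  have hσb : ∀ᵐ x ∂μ, ‖σ x‖ ≤ σmax := by
    filter_upwards [hbound] with x hx
    rw [Real.norm_eq_abs, abs_le]
    constructor <;> nlinarith [hx.1, hx.2]
  have hσXX : ∀ i k : Fin r, Integrable (fun x => σ x * X i x * X k x) μ := by
    intro i k
    have := (hXX i k).bdd_mul hσmeas.aestronglyMeasurable hσb
    simpa [mul_assoc] using this
  -- the RHS of the Galerkin system equals the same bilinear form applied to Sstar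
  have hRHS : ∀ i j, (∫ x, ∫ v, X i x * σ x * h x v * V j v ∂ν ∂μ)
      = ∑ k, (∫ x, σ x * X i x * X k x ∂μ) * Sstar k j := by
    intro i j
    have inner : ∀ x, (∫ v, X i x * σ x * h x v * V j v ∂ν)
        = ∑ k, σ x * X i x * X k x * Sstar k j := by
      intro x
      have e1 : (fun v => X i x * σ x * h x v * V j v)
          = fun v => ∑ k, ∑ l, (σ x * X i x * X k x * Sstar k l) * (V l v * V j v) := by
        funext v
        rw [hh, Finset.mul_sum, Finset.sum_mul]
        refine Finset.sum_congr rfl fun k _ => ?_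
        rw [Finset.mul_sum, Finset.sum_mul]
        exact Finset.sum_congr rfl fun l _ => by ring
      rw [e1, integral_finset_sum _ (fun k _ => integrable_finset_sum _
        (fun l _ => ((hVV l j).const_mul _)))]
      refine Finset.sum_congr rfl fun k _ => ?_
      rw [integral_finset_sum _ (fun l _ => (hVV l j).const_mul _)]
      simp only [integral_const_mul, hVortho]
      simp
    calc (∫ x, ∫ v, X i x * σ x * h x v * V j v ∂ν ∂μ)
        = ∫ x, ∑ k, σ x * X i x * X k x * Sstar k j ∂μ := by
          exact integral_congr_ae (Filter.Eventually.of_forall fun x => inner x)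
      _ = ∑ k, (∫ x, σ x * X i x * X k x ∂μ) * Sstar k j := by
          rw [integral_finset_sum _ (fun k _ => (hσXX i k).mul_const _)]
          exact Finset.sum_congr rfl fun k _ => integral_mul_const _ _
  -- hence the Galerkin matrix annihilates the difference
  have hD : ∀ i j, ∑ k, (∫ x, σ x * X i x * X k x ∂μ) * (S k j - Sstar k j) = 0 := by
    intro i j
    have := (hS i j).trans (hRHS i j)
    calc ∑ k, (∫ x, σ x * X i x * X k x ∂μ) * (S k j - Sstar k j)
        = (∑ k, (∫ x, σ x * X i x * X k x ∂μ) * S k j)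
          - ∑ k, (∫ x, σ x * X i x * X k x ∂μ) * Sstar k j := by
          rw [← Finset.sum_sub_distrib]
          exact Finset.sum_congr rfl fun k _ => by ring
      _ = 0 := by rw [this]; ring
  -- positive definiteness of the weighted Gram matrix kills the difference
  ext i0 j0
  rw [← sub_eq_zero]
  set c : Fin r → ℝ := fun k => S k j0 - Sstar k j0 with hc
  -- quadratic form identity
  set f : Ω → ℝ := fun x => ∑ k, c k * X k x with hf
  have hff : ∀ x, f x * f x = ∑ i, ∑ k, (c i * c k) * (X i x * X k x) := by
    intro x
    rw [hf]
    rw [Finset.sum_mul_sum]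
    exact Finset.sum_congr rfl fun i _ => Finset.sum_congr rfl fun k _ => by ring
  have hσff : ∀ x, σ x * (f x * f x) = ∑ i, ∑ k, (c i * c k) * (σ x * X i x * X k x) := by
    intro x
    rw [hff, Finset.mul_sum]
    refine Finset.sum_congr rfl fun i _ => ?_
    rw [Finset.mul_sum]
    exact Finset.sum_congr rfl fun k _ => by ring
  have hff_int : Integrable (fun x => f x * f x) μ := by
    rw [show (fun x => f x * f x) = fun x => ∑ i, ∑ k, (c i * c k) * (X i x * X k x) from
      funext hff]
    exact integrable_finset_sum _ (fun i _ => integrable_finset_sum _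
      (fun k _ => (hXX i k).const_mul _))
  have hσff_int : Integrable (fun x => σ x * (f x * f x)) μ := by
    rw [show (fun x => σ x * (f x * f x)) = fun x => ∑ i, ∑ k, (c i * c k) * (σ x * X i x * X k x)
      from funext hσff]
    exact integrable_finset_sum _ (fun i _ => integrable_finset_sum _
      (fun k _ => (hσXX i k).const_mul _))
  -- ∫ f² = Σ c²
  have hintff : (∫ x, f x * f x ∂μ) = ∑ i, c i * c i := by
    rw [show (fun x => f x * f x) = fun x => ∑ i, ∑ k, (c i * c k) * (X i x * X k x) from
      funext hff]
    rw [integral_finset_sum _ (fun i _ => integrable_finset_sum _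
      (fun k _ => (hXX i k).const_mul _))]
    refine Finset.sum_congr rfl fun i _ => ?_
    rw [integral_finset_sum _ (fun k _ => (hXX i k).const_mul _)]
    simp only [integral_const_mul, hXortho]
    simp
  -- ∫ σ f² = quadratic form = 0
  have hintσff : (∫ x, σ x * (f x * f x) ∂μ) = 0 := by
    rw [show (fun x => σ x * (f x * f x)) = fun x => ∑ i, ∑ k, (c i * c k) * (σ x * X i x * X k x)
      from funext hσff]
    rw [integral_finset_sum _ (fun i _ => integrable_finset_sum _
      (fun k _ => (hσXX i k).const_mul _))]
    have : ∀ i : Fin r, (∫ x, ∑ k, (c i * c k) * (σ x * X i x * X k x) ∂μ)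
        = c i * ∑ k, (∫ x, σ x * X i x * X k x ∂μ) * c k := by
      intro i
      rw [integral_finset_sum _ (fun k _ => (hσXX i k).const_mul _), Finset.mul_sum]
      refine Finset.sum_congr rfl fun k _ => ?_
      rw [integral_const_mul]
      ring
    rw [Finset.sum_congr rfl fun i _ => this i]
    refine Finset.sum_eq_zero fun i _ => ?_
    rw [hD i j0]
    ring
  -- lower bound: σmin Σc² ≤ ∫ σ f² = 0
  have hmono : σmin * ∑ i, c i * c i ≤ 0 := by
    have h1 : σmin * ∑ i, c i * c i = ∫ x, σmin * (f x * f x) ∂μ := by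
      rw [integral_const_mul, hintff]
    rw [h1, ← hintσff]
    refine integral_mono_ae (hff_int.const_mul _) hσff_int ?_
    filter_upwards [hbound] with x hx
    have : 0 ≤ f x * f x := mul_self_nonneg _
    nlinarith [hx.1]
  have hsum : ∑ i, c i * c i = 0 := by
    have hnn : 0 ≤ ∑ i, c i * c i := Finset.sum_nonneg fun i _ => mul_self_nonneg _
    nlinarith
  have : c i0 * c i0 = 0 := by
    have := (Finset.sum_eq_zero_iff_of_nonneg (fun i _ => mul_self_nonneg (c i))).mp hsum
    exact this i0 (Finset.mem_univ i0)
  have := mul_self_eq_zero.mp this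
  simpa [hc] using this
end

section
/- Let σ^S : ℝ³ → ℝ be differentiable with σ^S(x) > 0 for all x, let σ^A, G : ℝ³ → ℝ, let Δt > 0, and let ρⁿ : ℝ³ → ℝ be twice differentiable. Define g(x, v) := −(v·∇ρⁿ(x))/σ^S(x) and the macro update ρⁿ⁺¹(x) := ρⁿ(x) + Δt·( −(1/(4π)) ∇ₓ·(∫_{S²} v g(x, v) dμ(v)) − σ^A(x) ρⁿ(x) + G(x) ). Then ρⁿ⁺¹(x) = ρⁿ(x) + Δt·( ∇ₓ·( (1/(3σ^S(x))) ∇ρⁿ(x) ) − σ^A(x) ρⁿ(x) + G(x) ) for all x; that is, the limiting macro update is exactly one forward Euler step for the diffusion equation ∂ₜρ = ∇·((1/(3σ^S))∇ρ) − σ^A ρ + G. -/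
open MeasureTheory Real

/-- The unit sphere `S² ⊂ ℝ³`. -/
abbrev UnitSphere : Type := Metric.sphere (0 : EuclideanSpace ℝ (Fin 3)) 1

/-- The surface measure on `S²` (total measure `4π`). -/
noncomputable def sphereMeasure : Measure UnitSphere :=
  (volume : Measure (EuclideanSpace ℝ (Fin 3))).toSphere

/-- The divergence `∇·F = Σᵢ ∂ᵢ Fᵢ` of a vector field on `ℝ³`. -/
noncomputable def div3 (F : EuclideanSpace ℝ (Fin 3) → EuclideanSpace ℝ (Fin 3))
    (x : EuclideanSpace ℝ (Fin 3)) : ℝ :=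
  ∑ i : Fin 3, fderiv ℝ F x (EuclideanSpace.single i 1) i

section AuxAP

open Metric Pointwise

abbrev E3 := EuclideanSpace ℝ (Fin 3)

instance : IsFiniteMeasure sphereMeasure := by unfold sphereMeasure; infer_instance

lemma cont_integrable {F : Type*} [NormedAddCommGroup F] [NormedSpace ℝ F]
    (f : UnitSphere → F) (hf : Continuous f) : Integrable f sphereMeasure :=
  hf.integrable_of_hasCompactSupport
    (IsCompact.of_isClosed_subset isCompact_univ (isClosed_tsupport f) (Set.subset_univ _))

lemma sphereMeasure_univ_toReal : (sphereMeasure Set.univ).toReal = 4 * π := by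
  have hG : Real.Gamma (((3:ℕ):ℝ)/2 + 1) = 3/4 * Real.sqrt π := by
    rw [show (((3:ℕ):ℝ))/2 + 1 = (1/2 + 1) + 1 by norm_num]
    rw [Real.Gamma_add_one (by norm_num), Real.Gamma_add_one (by norm_num),
      Real.Gamma_one_half_eq]; ring
  have hs : Real.sqrt π ^ 3 = π * Real.sqrt π := by
    rw [pow_succ, sq_sqrt pi_pos.le]
  have hπ : Real.sqrt π ≠ 0 := (Real.sqrt_pos.mpr pi_pos).ne'
  have hball : volume (Metric.ball (0:E3) 1) = ENNReal.ofReal (4/3 * π) := by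
    rw [EuclideanSpace.volume_ball]
    simp only [Fintype.card_fin, ENNReal.ofReal_one, one_pow, one_mul]
    congr 1
    rw [hG, hs]
    field_simp
  have hdim : Module.finrank ℝ E3 = 3 := by simp [finrank_euclideanSpace]
  rw [sphereMeasure, Measure.toSphere_apply_univ, hdim, hball]
  rw [ENNReal.toReal_mul]
  simp [ENNReal.toReal_ofReal (by positivity : (0:ℝ) ≤ 4/3*π)]
  ring

lemma mem_sphere_map (e : E3 ≃ₗᵢ[ℝ] E3) (v : UnitSphere) :
    e (v : E3) ∈ Metric.sphere (0 : E3) 1 := by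
  rw [mem_sphere_zero_iff_norm, e.norm_map]
  exact mem_sphere_zero_iff_norm.mp v.2

noncomputable def sphereHomeo (e : E3 ≃ₗᵢ[ℝ] E3) : UnitSphere ≃ₜ UnitSphere where
  toFun v := ⟨e (v : E3), mem_sphere_map e v⟩
  invFun v := ⟨e.symm (v : E3), mem_sphere_map e.symm v⟩
  left_inv v := Subtype.ext (e.symm_apply_apply (v : E3))
  right_inv v := Subtype.ext (e.apply_symm_apply (v : E3))
  continuous_toFun := Continuous.subtype_mk (e.continuous.comp continuous_subtype_val) _
  continuous_invFun := Continuous.subtype_mk (e.symm.continuous.comp continuous_subtype_val) _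

@[simp] lemma sphereHomeo_coe (e : E3 ≃ₗᵢ[ℝ] E3) (v : UnitSphere) :
    ((sphereHomeo e v : UnitSphere) : E3) = e (v : E3) := rfl

lemma sphereHomeo_measurePreserving (e : E3 ≃ₗᵢ[ℝ] E3) :
    MeasurePreserving (sphereHomeo e) sphereMeasure sphereMeasure := by
  refine ⟨(sphereHomeo e).continuous.measurable, ?_⟩
  refine Measure.ext fun s hs => ?_
  rw [Measure.map_apply (sphereHomeo e).continuous.measurable hs]
  have hpre : MeasurableSet ((sphereHomeo e) ⁻¹' s) := (sphereHomeo e).continuous.measurable hs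
  rw [sphereMeasure, Measure.toSphere_apply' _ hpre, Measure.toSphere_apply' _ hs]
  congr 1
  have h1 : (Subtype.val '' ((sphereHomeo e) ⁻¹' s)) = ⇑e ⁻¹' (Subtype.val '' s) := by
    ext x
    simp only [Set.mem_image, Set.mem_preimage]
    constructor
    · rintro ⟨v, hv, rfl⟩
      exact ⟨sphereHomeo e v, hv, rfl⟩
    · rintro ⟨w, hw, hwx⟩
      refine ⟨(sphereHomeo e).symm w, ?_, ?_⟩
      · show sphereHomeo e ((sphereHomeo e).symm w) ∈ s
        simpa using hw
      · show (e.symm (w : E3) : E3) = x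
        rw [hwx, e.symm_apply_apply]
  have h2 : Set.Ioo (0:ℝ) 1 • (⇑e ⁻¹' (Subtype.val '' s))
      = ⇑e ⁻¹' (Set.Ioo (0:ℝ) 1 • (Subtype.val '' s)) := by
    ext x
    simp only [Set.mem_smul_set, Set.mem_preimage, Set.mem_smul]
    constructor
    · rintro ⟨r, hr, a, ha, rfl⟩
      exact ⟨r, hr, e a, ha, (e.map_smul r a).symm⟩
    · rintro ⟨r, hr, a, ha, hra⟩
      refine ⟨r, hr, e.symm a, by simpa using ha, ?_⟩
      have h3 := congrArg e.symm hra
      rw [e.symm_apply_apply] at h3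
      rw [← h3, e.symm.map_smul]
  rw [h1, h2,
    e.measurePreserving.measure_preimage_emb e.toHomeomorph.measurableEmbedding]

noncomputable def negCoord (i : Fin 3) : E3 ≃ₗᵢ[ℝ] E3 :=
  LinearIsometryEquiv.piLpCongrRight 2
    (fun j => if j = i then LinearIsometryEquiv.neg ℝ else LinearIsometryEquiv.refl ℝ ℝ)

lemma negCoord_apply (i : Fin 3) (x : E3) (k : Fin 3) :
    negCoord i x k = if k = i then -(x k) else x k := by
  rw [negCoord, LinearIsometryEquiv.piLpCongrRight_apply]
  show (if k = i then LinearIsometryEquiv.neg ℝ else LinearIsometryEquiv.refl ℝ ℝ) (x k)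
    = if k = i then -(x k) else x k
  split <;> simp

noncomputable def swapCoord (i j : Fin 3) : E3 ≃ₗᵢ[ℝ] E3 :=
  LinearIsometryEquiv.piLpCongrLeft 2 ℝ ℝ (Equiv.swap i j)

lemma swapCoord_apply (i j : Fin 3) (x : E3) (k : Fin 3) :
    swapCoord i j x k = x (Equiv.swap i j k) := by
  rw [swapCoord, LinearIsometryEquiv.piLpCongrLeft_apply]
  show x ((Equiv.swap i j).symm k) = _
  rw [Equiv.symm_swap]

lemma contCoord (i : Fin 3) : Continuous (fun v : UnitSphere => (v : E3) i) :=
  (EuclideanSpace.proj (𝕜 := ℝ) i).continuous.comp continuous_subtype_val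

noncomputable def mom (i j : Fin 3) : ℝ :=
  ∫ v : UnitSphere, (v : E3) i * (v : E3) j ∂sphereMeasure

lemma mom_offdiag {i j : Fin 3} (hij : i ≠ j) : mom i j = 0 := by
  have h := (sphereHomeo_measurePreserving (negCoord i)).integral_comp
    (sphereHomeo (negCoord i)).measurableEmbedding
    (fun v : UnitSphere => (v : E3) i * (v : E3) j)
  simp only [sphereHomeo_coe, negCoord_apply, if_pos rfl, if_neg hij.symm] at h
  have h2 : ∫ v : UnitSphere, -((v:E3) i) * ((v:E3) j) ∂sphereMeasure = - mom i j := by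
    simp only [neg_mul]
    rw [integral_neg]; rfl
  have : - mom i j = mom i j := by rw [← h2]; exact h
  linarith

lemma mom_diag (i : Fin 3) : mom i i = mom 0 0 := by
  have h := (sphereHomeo_measurePreserving (swapCoord i 0)).integral_comp
    (sphereHomeo (swapCoord i 0)).measurableEmbedding
    (fun v : UnitSphere => (v : E3) 0 * (v : E3) 0)
  simp only [sphereHomeo_coe, swapCoord_apply] at h
  rw [show (Equiv.swap i (0:Fin 3)) 0 = i from Equiv.swap_apply_right i 0] at h
  exact h

lemma mom_diag_val (i : Fin 3) : mom i i = 4 * π / 3 := by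
  have hsum : ∑ k : Fin 3, mom k k = 4 * π := by
    unfold mom
    rw [← integral_finset_sum _ (fun k _ => cont_integrable (fun v : UnitSphere => (v:E3) k * (v:E3) k)
      ((contCoord k).mul (contCoord k)))]
    have h1 : ∀ v : UnitSphere, ∑ k : Fin 3, (v:E3) k * (v:E3) k = 1 := by
      intro v
      have hn : ‖(v : E3)‖ = 1 := mem_sphere_zero_iff_norm.mp v.2
      have : ∑ k : Fin 3, (v:E3) k * (v:E3) k = (inner ℝ (v:E3) (v:E3) : ℝ) := by
        rw [PiLp.inner_apply]; simp [RCLike.inner_apply, sq]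
      rw [this, real_inner_self_eq_norm_sq, hn, one_pow]
    rw [integral_congr_ae (Filter.Eventually.of_forall h1), integral_const, smul_eq_mul, mul_one,
      measureReal_def, sphereMeasure_univ_toReal]
  have hdiag := mom_diag
  rw [Fin.sum_univ_three, hdiag 1, hdiag 2] at hsum
  rw [mom_diag i]
  have h0 : mom 0 0 = mom 0 0 := rfl
  rw [mom_diag 0] at hsum
  linarith

lemma sphere_integral_inner_smul (w : E3) :
    (∫ v : UnitSphere, ((inner ℝ (v : E3) w : ℝ)) • (v : E3) ∂sphereMeasure)
      = (4 * π / 3) • w := by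
  have hcont : Continuous (fun v : UnitSphere => ((inner ℝ (v : E3) w : ℝ)) • (v : E3)) :=
    Continuous.smul (f := fun v : UnitSphere => (inner ℝ (v : E3) w : ℝ))
      (continuous_subtype_val.inner continuous_const) continuous_subtype_val
  have hint := cont_integrable _ hcont
  refine PiLp.ext fun j => ?_
  have h1 : (∫ v : UnitSphere, ((inner ℝ (v : E3) w : ℝ)) • (v : E3) ∂sphereMeasure) j
      = ∫ v : UnitSphere, (inner ℝ (v:E3) w : ℝ) * (v:E3) j ∂sphereMeasure := by
    calc (∫ v : UnitSphere, ((inner ℝ (v : E3) w : ℝ)) • (v : E3) ∂sphereMeasure) j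
        = EuclideanSpace.proj (𝕜 := ℝ) j
            (∫ v : UnitSphere, ((inner ℝ (v : E3) w : ℝ)) • (v : E3) ∂sphereMeasure) := rfl
      _ = ∫ v : UnitSphere,
            EuclideanSpace.proj (𝕜 := ℝ) j (((inner ℝ (v : E3) w : ℝ)) • (v : E3))
              ∂sphereMeasure := (ContinuousLinearMap.integral_comp_comm _ hint).symm
      _ = _ := by
          refine integral_congr_ae (Filter.Eventually.of_forall fun v => ?_)
          simp [smul_eq_mul]
  rw [h1]
  have h2 : ∀ v : UnitSphere, (inner ℝ (v:E3) w : ℝ) * (v:E3) j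
      = ∑ i : Fin 3, w i * ((v:E3) i * (v:E3) j) := by
    intro v
    rw [PiLp.inner_apply]
    simp only [RCLike.inner_apply, conj_trivial]
    rw [Finset.sum_mul]
    exact Finset.sum_congr rfl fun i _ => by ring
  rw [integral_congr_ae (Filter.Eventually.of_forall h2),
    integral_finset_sum _ (fun i _ => (cont_integrable (fun v : UnitSphere => w i * ((v:E3) i * (v:E3) j))
      (continuous_const.mul ((contCoord i).mul (contCoord j))))),
    Finset.sum_eq_single j]
  · rw [integral_const_mul]
    have : (∫ v : UnitSphere, (v:E3) j * (v:E3) j ∂sphereMeasure) = mom j j := rfl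
    rw [this, mom_diag_val]
    simp [PiLp.smul_apply, smul_eq_mul]
    ring
  · intro i _ hij
    rw [integral_const_mul]
    have : (∫ v : UnitSphere, (v:E3) i * (v:E3) j ∂sphereMeasure) = mom i j := rfl
    rw [this, mom_offdiag hij, mul_zero]
  · intro h; exact absurd (Finset.mem_univ j) h

end AuxAP

/-- Asymptotic-preserving property of the first-order scheme: with the limiting micro
part `g(x,v) = −(v·∇ρⁿ(x))/σ^S(x)`, the macro update becomes exactly one forward Euler
step for the diffusion equation `∂ₜρ = ∇·((1/(3σ^S))∇ρ) − σ^A ρ + G`. -/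
theorem ap_limit_forward_euler
    (σS : EuclideanSpace ℝ (Fin 3) → ℝ) (hσS_diff : Differentiable ℝ σS)
    (hσS_pos : ∀ x, 0 < σS x)
    (σA G : EuclideanSpace ℝ (Fin 3) → ℝ)
    (Δt : ℝ) (hΔt : 0 < Δt)
    (ρn : EuclideanSpace ℝ (Fin 3) → ℝ)
    (hρn : Differentiable ℝ ρn)
    (hρn2 : Differentiable ℝ fun x => gradient ρn x)
    (g : EuclideanSpace ℝ (Fin 3) → UnitSphere → ℝ)
    (hg : ∀ x (v : UnitSphere),
      g x v = -(inner ℝ (v : EuclideanSpace ℝ (Fin 3)) (gradient ρn x) : ℝ) / σS x)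
    (ρnext : EuclideanSpace ℝ (Fin 3) → ℝ)
    (hnext : ∀ x, ρnext x = ρn x + Δt *
      (-(1 / (4 * π)) *
          div3 (fun y => ∫ v : UnitSphere,
            g y v • (v : EuclideanSpace ℝ (Fin 3)) ∂sphereMeasure) x
        - σA x * ρn x + G x)) :
    ∀ x, ρnext x = ρn x + Δt *
      (div3 (fun y => (1 / (3 * σS y)) • gradient ρn y) x - σA x * ρn x + G x) := by
  intro x
  rw [hnext x]
  have hF2diff : Differentiable ℝ (fun y => (1 / (3 * σS y)) • gradient ρn y) := by
    have h3 : Differentiable ℝ (fun y => (3 * σS y)⁻¹) :=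
      Differentiable.inv ((differentiable_const (3:ℝ)).mul hσS_diff)
        (fun y => (mul_pos (by norm_num : (0:ℝ) < 3) (hσS_pos y)).ne')
    simp only [one_div]; exact h3.smul hρn2
  have hFeq : (fun y => ∫ v : UnitSphere, g y v • (v : E3) ∂sphereMeasure)
      = (fun y => (-(4 * π)) • ((1 / (3 * σS y)) • gradient ρn y)) := by
    funext y
    have hσ : σS y ≠ 0 := (hσS_pos y).ne'
    have hstep : ∀ v : UnitSphere, g y v • (v : E3)
        = (-(1 / σS y)) • (((inner ℝ (v : E3) (gradient ρn y) : ℝ)) • (v : E3)) := by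
      intro v
      rw [hg, smul_smul]
      congr 1
      field_simp
    rw [integral_congr_ae (Filter.Eventually.of_forall hstep), integral_smul,
      sphere_integral_inner_smul, smul_smul, smul_smul]
    congr 1
    field_simp
  rw [hFeq]
  have hdiv : div3 (fun y => (-(4 * π)) • ((1 / (3 * σS y)) • gradient ρn y)) x
      = (-(4 * π)) * div3 (fun y => (1 / (3 * σS y)) • gradient ρn y) x := by
    unfold div3
    rw [Finset.mul_sum]
    refine Finset.sum_congr rfl fun i _ => ?_
    rw [fderiv_fun_const_smul (hF2diff x)]
    simp [PiLp.smul_apply, smul_eq_mul]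
  rw [hdiv]
  have hπ : π ≠ 0 := pi_ne_zero
  congr 2
  field_simp
end

section
/- Let σ^S : ℝ³ → ℝ be differentiable with σ^S(x) > 0 for all x, let σ^A, G : ℝ³ → ℝ, and let Δt > 0. Let ρ^{n−1/2}, ρⁿ : ℝ³ → ℝ with ρ^{n−1/2} twice differentiable, and define gⁿ(x, v) := −(v·∇ρ^{n−1/2}(x))/σ^S(x), ρ^{n+1/2}(x) := ρⁿ(x) + (Δt/2)( −(1/(4π)) ∇ₓ·(∫_{S²} v gⁿ(x, v) dμ(v)) − σ^A(x) ρⁿ(x) + G(x) ). Assume ρ^{n+1/2} is twice differentiable, define g^{n+1/2}(x, v) := −(v·∇ρ^{n+1/2}(x))/σ^S(x) and ρⁿ⁺¹(x) := ρⁿ(x) + Δt·( −(1/(4π)) ∇ₓ·(∫_{S²} v g^{n+1/2}(x, v) dμ(v)) − σ^A(x) ρ^{n+1/2}(x) + G(x) ). Then (ρ^{n+1/2} − ρⁿ)/(Δt/2) = ∇·((1/(3σ^S))∇ρ^{n−1/2}) − σ^A ρⁿ + G and (ρⁿ⁺¹ − ρⁿ)/Δt = ∇·((1/(3σ^S))∇ρ^{n+1/2})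 − σ^A ρ^{n+1/2} + G pointwise; that is, the limiting updates constitute a second-order explicit Runge–Kutta step for the diffusion equation ∂ₜρ = ∇·((1/(3σ^S))∇ρ) − σ^A ρ + G. -/
open MeasureTheory Real

open Set Metric

local notation "E3" => EuclideanSpace ℝ (Fin 3)

-- radial integral : ∫ r ∂ volumeIoiPow 2 of r² on (0,1) = 1/5
lemma radial_int :
    (∫ r : Ioi (0:ℝ), ((r:ℝ)^2 * Set.indicator (Iio (1:ℝ)) 1 (r:ℝ)) ∂(Measure.volumeIoiPow 2))
      = 1/5 := by
  simp only [Measure.volumeIoiPow, ENNReal.ofReal]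
  rw [integral_withDensity_eq_integral_smul
      ((measurable_subtype_coe.pow_const _).real_toNNReal),
    integral_subtype_comap measurableSet_Ioi
      (fun a : ℝ => Real.toNNReal (a ^ 2) • (a^2 * Set.indicator (Iio (1:ℝ)) 1 a))]
  have h1 : ∫ a in Ioi (0:ℝ), Real.toNNReal (a ^ 2) • (a^2 * Set.indicator (Iio (1:ℝ)) 1 a)
      = ∫ a in Ioi (0:ℝ), Set.indicator (Iio (1:ℝ)) (fun a => a^4) a := by
    refine setIntegral_congr_fun measurableSet_Ioi (fun a ha => ?_)
    have h2 : (0:ℝ) ≤ a ^ 2 := sq_nonneg a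
    rw [NNReal.smul_def, Real.coe_toNNReal _ h2]
    by_cases h : a ∈ Iio (1:ℝ)
    · simp [Set.indicator_of_mem h]; ring
    · simp [Set.indicator_of_notMem h]
  rw [h1, setIntegral_indicator measurableSet_Iio, Set.Ioi_inter_Iio]
  rw [← integral_Ioc_eq_integral_Ioo, ← intervalIntegral.integral_of_le zero_le_one,
    integral_pow]
  norm_num

lemma sphere_moment_eq_ball (i j : Fin 3) :
    ∫ v : UnitSphere, ((v : E3) i * (v : E3) j) ∂sphereMeasure
      = 5 * ∫ x in Metric.ball (0:E3) 1, (x i * x j) := by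
  set μ : Measure E3 := volume
  set g : UnitSphere × Ioi (0:ℝ) → ℝ := fun p =>
    ((p.1 : E3) i * (p.1 : E3) j) * ((p.2:ℝ)^2 * Set.indicator (Iio (1:ℝ)) 1 (p.2:ℝ)) with hg
  have key : ∫ x in Metric.ball (0:E3) 1, (x i * x j) ∂μ
      = ∫ p, g p ∂(μ.toSphere.prod (Measure.volumeIoiPow 2)) := by
    have h1 : ∫ x in Metric.ball (0:E3) 1, (x i * x j) ∂μ
        = ∫ x, Set.indicator (Metric.ball (0:E3) 1) (fun x => x i * x j) x ∂μ :=
      (integral_indicator measurableSet_ball).symm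
    have h2 : ∫ x, Set.indicator (Metric.ball (0:E3) 1) (fun x => x i * x j) x ∂μ
        = ∫ x : ({0}ᶜ : Set E3),
            Set.indicator (Metric.ball (0:E3) 1) (fun x => x i * x j) x
            ∂(μ.comap Subtype.val) := by
      rw [integral_subtype_comap (measurableSet_singleton (0:E3)).compl,
        MeasureTheory.restrict_compl_singleton]
    have h3 := μ.measurePreserving_homeomorphUnitSphereProd.integral_comp
        (Homeomorph.measurableEmbedding _) g
    have hfin : Module.finrank ℝ E3 - 1 = 2 := by
      simp [finrank_euclideanSpace]
    rw [hfin] at h3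
    have h4 : ∫ x : ({0}ᶜ : Set E3),
            Set.indicator (Metric.ball (0:E3) 1) (fun x => x i * x j) x
            ∂(μ.comap Subtype.val)
        = ∫ x : ({0}ᶜ : Set E3), g (homeomorphUnitSphereProd E3 x) ∂(μ.comap Subtype.val) := by
      refine integral_congr_ae (Filter.Eventually.of_forall fun x => ?_)
      have hx : (x : E3) ≠ 0 := x.2
      have hnx : ‖(x:E3)‖ ≠ 0 := norm_ne_zero_iff.2 hx
      simp only [hg, homeomorphUnitSphereProd_apply_fst_coe,
        homeomorphUnitSphereProd_apply_snd_coe]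
      by_cases h : (x : E3) ∈ Metric.ball (0:E3) 1
      · have hlt : ‖(x:E3)‖ < 1 := mem_ball_zero_iff.1 h
        rw [Set.indicator_of_mem h, Set.indicator_of_mem (by simpa using hlt)]
        simp only [PiLp.smul_apply, smul_eq_mul, Pi.one_apply, mul_one, sq]
        field_simp
      · have hlt : ¬ (‖(x:E3)‖ < 1) := fun hc => h (mem_ball_zero_iff.2 hc)
        rw [Set.indicator_of_notMem h, Set.indicator_of_notMem (by simpa using hlt)]
        ring
    rw [h1, h2, h4, h3]
  have hprod : ∫ p, g p ∂(μ.toSphere.prod (Measure.volumeIoiPow 2))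
      = (∫ v : UnitSphere, ((v : E3) i * (v : E3) j) ∂μ.toSphere)
        * ∫ r : Ioi (0:ℝ), ((r:ℝ)^2 * Set.indicator (Iio (1:ℝ)) 1 (r:ℝ))
            ∂(Measure.volumeIoiPow 2) :=
    integral_prod_mul (fun v : UnitSphere => ((v : E3) i * (v : E3) j))
      (fun r : Ioi (0:ℝ) => ((r:ℝ)^2 * Set.indicator (Iio (1:ℝ)) 1 (r:ℝ)))
  rw [key, hprod, radial_int, sphereMeasure]
  ring

lemma ball_int_offdiag {i j : Fin 3} (hij : i ≠ j) :
    ∫ x in Metric.ball (0:E3) 1, (x i * x j) = 0 := by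
  set L : E3 ≃ₗᵢ[ℝ] E3 := LinearIsometryEquiv.piLpCongrRight 2
    (fun k => if k = i then LinearIsometryEquiv.neg ℝ (E := ℝ) else LinearIsometryEquiv.refl ℝ ℝ)
    with hL
  have hLx : ∀ (x : E3) (k : Fin 3), L x k = if k = i then -(x k) else x k := by
    intro x k
    by_cases h : k = i
    · subst h; simp [hL, LinearIsometryEquiv.piLpCongrRight_apply]
    · simp [hL, LinearIsometryEquiv.piLpCongrRight_apply, h]
  have hpre : L ⁻¹' Metric.ball (0:E3) 1 = Metric.ball (0:E3) 1 := by
    ext x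
    simp [mem_ball_zero_iff, L.norm_map]
  have hmp := (L.measurePreserving).setIntegral_preimage_emb
    (L.toHomeomorph.measurableEmbedding) (fun y : E3 => y i * y j) (Metric.ball (0:E3) 1)
  rw [hpre] at hmp
  have heq : ∀ x : E3, (L x) i * (L x) j = -(x i * x j) := by
    intro x
    rw [hLx, hLx, if_pos rfl, if_neg hij.symm]
    ring
  have : ∫ x in Metric.ball (0:E3) 1, (x i * x j) ∂(volume)
      = - ∫ x in Metric.ball (0:E3) 1, (x i * x j) ∂(volume) := by
    conv_lhs => rw [← hmp]
    rw [← integral_neg]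
    exact setIntegral_congr_fun measurableSet_ball fun x _ => heq x
  linarith

lemma volume_ball3 : (volume (Metric.ball (0:E3) 1)).toReal = 4 * π / 3 := by
  rw [EuclideanSpace.volume_ball]
  have h1 : (Fintype.card (Fin 3) : ℝ) = 3 := by simp
  have hG : Real.Gamma ((Fintype.card (Fin 3) : ℝ) / 2 + 1) = 3/4 * Real.sqrt π := by
    rw [h1]
    have h32 : (3:ℝ)/2 + 1 = (1/2 + 1) + 1 := by norm_num
    rw [h32, Real.Gamma_add_one (by norm_num), Real.Gamma_add_one (by norm_num),
      Real.Gamma_one_half_eq]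
    ring
  rw [hG]
  simp only [Fintype.card_fin]
  have hsq : Real.sqrt π ^ 3 / (3/4 * Real.sqrt π) = 4 * π / 3 := by
    have hπ : Real.sqrt π ^ 2 = π := Real.sq_sqrt pi_pos.le
    have hs : Real.sqrt π ≠ 0 := by positivity
    rw [pow_succ, hπ]
    field_simp
  rw [hsq, ENNReal.ofReal_one, one_pow, one_mul,
    ENNReal.toReal_ofReal (by positivity)]

lemma radial_int2 :
    (∫ y in Ioi (0:ℝ), y ^ 2 • Set.indicator (Iio (1:ℝ)) (fun r => r^2) y) = 1/5 := by
  have h1 : ∫ y in Ioi (0:ℝ), y ^ 2 • Set.indicator (Iio (1:ℝ)) (fun r => r^2) y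
      = ∫ y in Ioi (0:ℝ), Set.indicator (Iio (1:ℝ)) (fun y => y^4) y := by
    refine setIntegral_congr_fun measurableSet_Ioi (fun a _ => ?_)
    by_cases h : a ∈ Iio (1:ℝ)
    · rw [Set.indicator_of_mem h, Set.indicator_of_mem h]
      simp [smul_eq_mul]; ring
    · rw [Set.indicator_of_notMem h, Set.indicator_of_notMem h, smul_zero]
  rw [h1, setIntegral_indicator measurableSet_Iio, Set.Ioi_inter_Iio,
    ← integral_Ioc_eq_integral_Ioo, ← intervalIntegral.integral_of_le zero_le_one,
    integral_pow]
  norm_num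

lemma ball_norm_sq : ∫ x in Metric.ball (0:E3) 1, ‖x‖^2 = 4 * π / 5 := by
  have h := integral_fun_norm_addHaar (volume : Measure E3)
    (Set.indicator (Iio (1:ℝ)) (fun r => r^2))
  have hfin : Module.finrank ℝ E3 = 3 := by simp [finrank_euclideanSpace]
  rw [hfin] at h
  have hL : ∫ x : E3, Set.indicator (Iio (1:ℝ)) (fun r => r^2) ‖x‖
      = ∫ x in Metric.ball (0:E3) 1, ‖x‖^2 := by
    rw [← integral_indicator measurableSet_ball]
    refine integral_congr_ae (Filter.Eventually.of_forall fun x => ?_)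
    show Set.indicator (Iio (1:ℝ)) (fun r => r^2) ‖x‖
      = Set.indicator (Metric.ball (0:E3) 1) (fun x : E3 => ‖x‖^2) x
    by_cases hx : x ∈ Metric.ball (0:E3) 1
    · rw [Set.indicator_of_mem hx, Set.indicator_of_mem (by simpa [mem_ball_zero_iff] using hx)]
    · rw [Set.indicator_of_notMem hx,
        Set.indicator_of_notMem (by simpa [mem_ball_zero_iff] using hx)]
  rw [hL] at h
  rw [h, measureReal_def, volume_ball3, radial_int2]
  norm_num
  ring

lemma ball_diag_eq (i j : Fin 3) :
    ∫ x in Metric.ball (0:E3) 1, (x i * x i) = ∫ x in Metric.ball (0:E3) 1, (x j * x j) := by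
  set L : E3 ≃ₗᵢ[ℝ] E3 := LinearIsometryEquiv.piLpCongrLeft 2 ℝ ℝ (Equiv.swap i j) with hL
  have hLx : ∀ (x : E3) (k : Fin 3), L x k = x (Equiv.swap i j k) := by
    intro x k
    simp [hL, LinearIsometryEquiv.piLpCongrLeft_apply, Equiv.piCongrLeft'_apply,
      Equiv.symm_swap]
  have hpre : L ⁻¹' Metric.ball (0:E3) 1 = Metric.ball (0:E3) 1 := by
    ext x
    simp [mem_ball_zero_iff, L.norm_map]
  have hmp := (L.measurePreserving).setIntegral_preimage_emb
    (L.toHomeomorph.measurableEmbedding) (fun y : E3 => y j * y j) (Metric.ball (0:E3) 1)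
  rw [hpre] at hmp
  rw [← hmp]
  refine setIntegral_congr_fun measurableSet_ball fun x _ => ?_
  rw [hLx, Equiv.swap_apply_right]

lemma ball_int_diag (i : Fin 3) :
    ∫ x in Metric.ball (0:E3) 1, (x i * x i) = 4 * π / 15 := by
  have hint : ∀ k : Fin 3, IntegrableOn (fun x : E3 => x k * x k) (Metric.ball (0:E3) 1) := by
    intro k
    have hc : Continuous (fun x : E3 => x k * x k) := by
      have : Continuous (fun x : E3 => x k) := (EuclideanSpace.proj k).continuous
      exact this.mul this
    exact (hc.continuousOn.integrableOn_compact (isCompact_closedBall _ _)).mono_set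
      ball_subset_closedBall
  have hsum : ∑ k : Fin 3, ∫ x in Metric.ball (0:E3) 1, (x k * x k)
      = ∫ x in Metric.ball (0:E3) 1, ‖x‖^2 := by
    rw [← integral_finset_sum _ (fun k _ => hint k)]
    refine setIntegral_congr_fun measurableSet_ball fun x _ => ?_
    have : (‖x‖:ℝ)^2 = inner ℝ x x := (real_inner_self_eq_norm_sq x).symm
    rw [this, PiLp.inner_apply]
    simp [RCLike.inner_apply, sq]
  have hall : ∀ k : Fin 3, ∫ x in Metric.ball (0:E3) 1, (x k * x k)
      = ∫ x in Metric.ball (0:E3) 1, (x i * x i) := fun k => ball_diag_eq k i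
  rw [Finset.sum_congr rfl (fun k _ => hall k), Finset.sum_const] at hsum
  simp only [Finset.card_univ, Fintype.card_fin, nsmul_eq_mul, Nat.cast_ofNat] at hsum
  rw [ball_norm_sq] at hsum
  linarith

lemma sphere_moment (i j : Fin 3) :
    ∫ v : UnitSphere, ((v : E3) i * (v : E3) j) ∂sphereMeasure
      = if i = j then 4 * π / 3 else 0 := by
  rw [sphere_moment_eq_ball]
  by_cases h : i = j
  · subst h
    rw [if_pos rfl, ball_int_diag]
    ring
  · rw [if_neg h, ball_int_offdiag h, mul_zero]

instance inst_s11 : IsFiniteMeasure sphereMeasure := by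
  unfold sphereMeasure; infer_instance

instance : IsFiniteMeasureOnCompacts sphereMeasure :=
  ⟨fun _ _ => measure_lt_top _ _⟩

lemma sphere_integrable {F : Type*} [NormedAddCommGroup F] [NormedSpace ℝ F]
    {f : UnitSphere → F} (hf : Continuous f) : Integrable f sphereMeasure :=
  hf.integrable_of_hasCompactSupport (HasCompactSupport.of_compactSpace f)

lemma sphere_vector_moment (w : E3) :
    ∫ v : UnitSphere, (inner ℝ (v : E3) w : ℝ) • (v : E3) ∂sphereMeasure
      = ((4 * π / 3) : ℝ) • w := by
  have hcont : Continuous fun v : UnitSphere => (inner ℝ (v : E3) w : ℝ) • (v : E3) := by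
    have h1 : Continuous fun v : UnitSphere => (v : E3) := continuous_subtype_val
    exact (h1.inner (𝕜 := ℝ) continuous_const).smul h1
  have hint := sphere_integrable hcont
  refine PiLp.ext fun i => ?_
  have hproj := (EuclideanSpace.proj (𝕜 := ℝ) i).integral_comp_comm hint
  have hLHS : (∫ v : UnitSphere, (inner ℝ (v : E3) w : ℝ) • (v : E3) ∂sphereMeasure) i
      = ∫ v : UnitSphere, (inner ℝ (v : E3) w : ℝ) * (v : E3) i ∂sphereMeasure := by
    calc (∫ v : UnitSphere, (inner ℝ (v : E3) w : ℝ) • (v : E3) ∂sphereMeasure) i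
        = (EuclideanSpace.proj (𝕜 := ℝ) i)
            (∫ v : UnitSphere, (inner ℝ (v : E3) w : ℝ) • (v : E3) ∂sphereMeasure) :=
          rfl
      _ = ∫ v : UnitSphere, (EuclideanSpace.proj (𝕜 := ℝ) i)
            ((inner ℝ (v : E3) w : ℝ) • (v : E3)) ∂sphereMeasure := hproj.symm
      _ = ∫ v : UnitSphere, (inner ℝ (v : E3) w : ℝ) * (v : E3) i ∂sphereMeasure := by
          refine integral_congr_ae (Filter.Eventually.of_forall fun v => ?_)
          simp [PiLp.smul_apply, smul_eq_mul]
  rw [hLHS]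
  have hexp : ∀ v : UnitSphere, (inner ℝ (v : E3) w : ℝ) * (v : E3) i
      = ∑ j : Fin 3, w j * ((v : E3) j * (v : E3) i) := by
    intro v
    rw [PiLp.inner_apply]
    simp only [RCLike.inner_apply, conj_trivial, Finset.sum_mul, Finset.mul_sum]
    refine Finset.sum_congr rfl fun j _ => by ring
  rw [integral_congr_ae (Filter.Eventually.of_forall hexp)]
  have hintj : ∀ j : Fin 3, Integrable
      (fun v : UnitSphere => w j * ((v : E3) j * (v : E3) i)) sphereMeasure := by
    intro j
    refine sphere_integrable ?_
    have h1 : Continuous fun v : UnitSphere => (v : E3) := continuous_subtype_val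
    exact continuous_const.mul (((EuclideanSpace.proj j).continuous.comp h1).mul
      ((EuclideanSpace.proj i).continuous.comp h1))
  rw [integral_finset_sum _ fun j _ => hintj j]
  have : ∀ j : Fin 3, ∫ v : UnitSphere, w j * ((v : E3) j * (v : E3) i) ∂sphereMeasure
      = w j * (if j = i then 4 * π / 3 else 0) := by
    intro j
    rw [integral_const_mul, sphere_moment]
  rw [Finset.sum_congr rfl fun j _ => this j]
  rw [Finset.sum_eq_single i]
  · simp [PiLp.smul_apply, smul_eq_mul]; ring
  · intro b _ hb; simp [hb]
  · intro h; exact absurd (Finset.mem_univ i) h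

lemma field_eq (σS : E3 → ℝ) (hσS_pos : ∀ x, 0 < σS x)
    (g : E3 → UnitSphere → ℝ) (Gr : E3 → E3)
    (hgdef : ∀ x (v : UnitSphere), g x v = -(inner ℝ (v : E3) (Gr x) : ℝ) / σS x) (y : E3) :
    (∫ v : UnitSphere, g y v • (v : E3) ∂sphereMeasure)
      = (-(4*π)) • ((1/(3*σS y)) • Gr y) := by
  have h1 : ∀ v : UnitSphere, g y v • (v : E3)
      = (-(1/σS y)) • ((inner ℝ (v : E3) (Gr y) : ℝ) • (v : E3)) := by
    intro v
    rw [hgdef, smul_smul]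
    congr 1
    field_simp
  rw [integral_congr_ae (Filter.Eventually.of_forall h1), integral_smul,
    sphere_vector_moment, smul_smul, smul_smul]
  congr 1
  have hs := (hσS_pos y).ne'
  field_simp

lemma div3_smul (σS : E3 → ℝ) (hσS_diff : Differentiable ℝ σS) (hσS_pos : ∀ x, 0 < σS x)
    (Gr : E3 → E3) (hGr : Differentiable ℝ Gr) (x : E3) :
    div3 (fun y => (-(4*π)) • ((1/(3*σS y)) • Gr y)) x
      = (-(4*π)) * div3 (fun y => (1/(3*σS y)) • Gr y) x := by
  have h3 : Differentiable ℝ fun y : E3 => 3 * σS y := hσS_diff.const_mul 3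
  have hinv : Differentiable ℝ fun y : E3 => 1 / (3 * σS y) := by
    simp only [one_div]
    exact fun y => (h3 y).inv (mul_pos (by norm_num) (hσS_pos y)).ne'
  have hF : Differentiable ℝ fun y : E3 => (1/(3*σS y)) • Gr y := hinv.smul hGr
  unfold div3
  rw [fderiv_fun_const_smul (hF x)]
  simp only [ContinuousLinearMap.coe_smul', Pi.smul_apply, PiLp.smul_apply, smul_eq_mul]
  rw [Finset.mul_sum]

/-- Asymptotic-preserving property of the second-order scheme: with the limiting micro
parts `gⁿ = −(v·∇ρ^{n−1/2})/σ^S` and `g^{n+1/2} = −(v·∇ρ^{n+1/2})/σ^S`, the two macro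
updates constitute a second-order explicit Runge–Kutta step for the diffusion equation
`∂ₜρ = ∇·((1/(3σ^S))∇ρ) − σ^A ρ + G`. -/
theorem ap_limit_second_order_RK
    (σS : EuclideanSpace ℝ (Fin 3) → ℝ) (hσS_diff : Differentiable ℝ σS)
    (hσS_pos : ∀ x, 0 < σS x)
    (σA G : EuclideanSpace ℝ (Fin 3) → ℝ)
    (Δt : ℝ) (hΔt : 0 < Δt)
    (ρhalfminus ρn : EuclideanSpace ℝ (Fin 3) → ℝ)
    (hρhm : Differentiable ℝ ρhalfminus)
    (hρhm2 : Differentiable ℝ fun x => gradient ρhalfminus x)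
    (gn : EuclideanSpace ℝ (Fin 3) → UnitSphere → ℝ)
    (hgn : ∀ x (v : UnitSphere),
      gn x v = -(inner ℝ (v : EuclideanSpace ℝ (Fin 3)) (gradient ρhalfminus x) : ℝ) / σS x)
    (ρhalfplus : EuclideanSpace ℝ (Fin 3) → ℝ)
    (hρhp_def : ∀ x, ρhalfplus x = ρn x + (Δt / 2) *
      (-(1 / (4 * π)) *
          div3 (fun y => ∫ v : UnitSphere,
            gn y v • (v : EuclideanSpace ℝ (Fin 3)) ∂sphereMeasure) x
        - σA x * ρn x + G x))
    (hρhp : Differentiable ℝ ρhalfplus)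
    (hρhp2 : Differentiable ℝ fun x => gradient ρhalfplus x)
    (ghalf : EuclideanSpace ℝ (Fin 3) → UnitSphere → ℝ)
    (hghalf : ∀ x (v : UnitSphere),
      ghalf x v = -(inner ℝ (v : EuclideanSpace ℝ (Fin 3)) (gradient ρhalfplus x) : ℝ) / σS x)
    (ρnext : EuclideanSpace ℝ (Fin 3) → ℝ)
    (hnext : ∀ x, ρnext x = ρn x + Δt *
      (-(1 / (4 * π)) *
          div3 (fun y => ∫ v : UnitSphere,
            ghalf y v • (v : EuclideanSpace ℝ (Fin 3)) ∂sphereMeasure) x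
        - σA x * ρhalfplus x + G x)) :
    (∀ x, (ρhalfplus x - ρn x) / (Δt / 2)
      = div3 (fun y => (1 / (3 * σS y)) • gradient ρhalfminus y) x
        - σA x * ρn x + G x) ∧
    (∀ x, (ρnext x - ρn x) / Δt
      = div3 (fun y => (1 / (3 * σS y)) • gradient ρhalfplus y) x
        - σA x * ρhalfplus x + G x) := by
  have hπ : π ≠ 0 := pi_ne_zero
  have hdiv1 : ∀ x, div3 (fun y => ∫ v : UnitSphere,
        gn y v • (v : EuclideanSpace ℝ (Fin 3)) ∂sphereMeasure) x
      = (-(4*π)) * div3 (fun y => (1 / (3 * σS y)) • gradient ρhalfminus y) x := by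
    intro x
    rw [show (fun y => ∫ v : UnitSphere,
          gn y v • (v : EuclideanSpace ℝ (Fin 3)) ∂sphereMeasure)
        = fun y => (-(4*π)) • ((1/(3*σS y)) • gradient ρhalfminus y) from
      funext fun y => field_eq σS hσS_pos gn _ hgn y]
    exact div3_smul σS hσS_diff hσS_pos _ hρhm2 x
  have hdiv2 : ∀ x, div3 (fun y => ∫ v : UnitSphere,
        ghalf y v • (v : EuclideanSpace ℝ (Fin 3)) ∂sphereMeasure) x
      = (-(4*π)) * div3 (fun y => (1 / (3 * σS y)) • gradient ρhalfplus y) x := by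
    intro x
    rw [show (fun y => ∫ v : UnitSphere,
          ghalf y v • (v : EuclideanSpace ℝ (Fin 3)) ∂sphereMeasure)
        = fun y => (-(4*π)) • ((1/(3*σS y)) • gradient ρhalfplus y) from
      funext fun y => field_eq σS hσS_pos ghalf _ hghalf y]
    exact div3_smul σS hσS_diff hσS_pos _ hρhp2 x
  constructor
  · intro x
    rw [hρhp_def x, hdiv1 x]
    have ht : Δt ≠ 0 := hΔt.ne'
    field_simp
    ring
  · intro x
    rw [hnext x, hdiv2 x]
    have ht : Δt ≠ 0 := hΔt.ne'
    field_simp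
    ring
end
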